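/- Fix an integer m > 1. Let C(q) = ∑_{n≥0} c(n) q^n be the unique formal power series over ℤ satisfying (1−q)·C(q) = (1−q) + q·C(q^m). Then for every nonnegative integer n, c(m·n + 1) = ∑_{k=0}^{n} c(k). -/

import Mathlib

open PowerSeries

/-- Substitution of `q^m` for `q` in a formal power series: `F(q) ↦ F(q^m)`. -/
noncomputable def substPow (R : Type*) [Semiring R] (m : ℕ) (F : PowerSeries R) : PowerSeries R :=
  PowerSeries.mk fun n => if m ∣ n then PowerSeries.coeff (R := R) (n / m) F else 0

theorem noGap_sum (m : ℕ) (hm : 1 < m) (C : PowerSeries ℤ)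
    (hC : (1 - X) * C = (1 - X) + X * substPow ℤ m C) (c : ℕ → ℤ)
    (hc : ∀ n, c n = PowerSeries.coeff (R := ℤ) n C) (n : ℕ) :
    c (m * n + 1) = ∑ k ∈ Finset.range (n + 1), c k := by
  -- key coefficient recurrence
  have step : ∀ k : ℕ, c (k + 1) = c k + (if k = 0 then (-1 : ℤ) else 0)
      + (if m ∣ k then c (k / m) else 0) := by
    intro k
    have h := congrArg (PowerSeries.coeff (R := ℤ) (k + 1)) hC
    simp only [sub_mul, one_mul, map_sub, map_add, coeff_succ_X_mul, coeff_one,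
      Nat.succ_ne_zero, if_false, coeff_X, substPow, coeff_mk] at h
    rw [← hc, ← hc] at h
    rcases eq_or_ne k 0 with rfl | hk
    · simp only [if_pos rfl, Nat.add_eq, dvd_zero, if_true, Nat.zero_div] at h ⊢
      rw [← hc] at h
      linarith
    · have h1 : ¬ (k + 1 = 1) := by omega
      simp only [if_neg h1, if_neg hk] at h ⊢
      rcases em (m ∣ k) with hd | hd
      · simp only [if_pos hd] at h ⊢
        rw [← hc] at h
        linarith
      · simp only [if_neg hd] at h ⊢
        linarith
  have c0 : c 0 = 1 := by
    have h := congrArg (PowerSeries.coeff (R := ℤ) 0) hC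
    simp only [sub_mul, one_mul, map_sub, map_add, coeff_zero_eq_constantCoeff,
      map_mul, map_one, constantCoeff_X, zero_mul, mul_zero, sub_zero, map_sub,
      map_one, add_zero] at h
    rw [hc]; simpa using h
  -- stay-constant steps
  have stepA : ∀ k : ℕ, k ≠ 0 → ¬ m ∣ k → c (k + 1) = c k := by
    intro k hk hd
    have := step k
    simp only [if_neg hk, if_neg hd, add_zero] at this
    exact this
  have stepB : ∀ k : ℕ, k ≠ 0 → m ∣ k → c (k + 1) = c k + c (k / m) := by
    intro k hk hd
    have := step k
    simp only [if_neg hk, if_pos hd, add_zero] at this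
    exact this
  have chain : ∀ N t : ℕ, t < m → c (m * N + 1 + t) = c (m * N + 1) := by
    intro N t
    induction t with
    | zero => intro _; rfl
    | succ t ih =>
      intro ht
      have ht' : t < m := by omega
      have hk : m * N + 1 + t ≠ 0 := by omega
      have hd : ¬ m ∣ (m * N + 1 + t) := by
        intro hd
        have h' : m ∣ (1 + t) := (Nat.dvd_add_right (Dvd.intro N rfl)).mp
          (by rwa [show m * N + (1 + t) = m * N + 1 + t by ring])
        have := Nat.le_of_dvd (by omega) h'
        omega
      have := stepA (m * N + 1 + t) hk hd
      rw [show m * N + 1 + (t + 1) = (m * N + 1 + t) + 1 by ring, this, ih ht']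
  induction n with
  | zero =>
    have := step 0
    simp only [if_pos rfl, dvd_zero, if_true, Nat.zero_div] at this
    simp only [mul_zero, zero_add, Finset.sum_range_one]
    rw [this, c0]; ring
  | succ n ih =>
    have h1 : c (m * (n + 1) + 1) = c (m * (n + 1)) + c (n + 1) := by
      have hd : m ∣ m * (n + 1) := Dvd.intro _ rfl
      have := stepB (m * (n + 1)) (by positivity) hd
      rw [this, Nat.mul_div_cancel_left _ (by omega : 0 < m)]
    have h2 : c (m * (n + 1)) = c (m * n + 1) := by
      have := chain n (m - 1) (by omega)
      rw [show m * (n + 1) = m * n + 1 + (m - 1) by rw [Nat.mul_succ]; omega, this]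
    rw [Finset.sum_range_succ, h1, h2, ih]
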